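/- CQ_3 contains a subgraph homeomorphic to the complete bipartite graph K_{3,3}: there exist six distinct vertices a1, a2, a3, b1, b2, b3 of CQ_3 and nine paths P_{ij} in CQ_3 (for 1 <= i, j <= 3), where P_{ij} joins a_i to b_j, such that the interiors of the nine paths are pairwise disjoint and no interior vertex of any of the paths is one of the six branch vertices a1, a2, a3, b1, b2, b3. -/

import Mathlib

/-- Vertices of the 3-dimensional cubes: binary strings `x1x2x3` of length 3. -/
abbrev Vtx3 := Bool × Bool × Bool

/-- The 12 edges of the 3-dimensional crossed cube `CQ_3`. -/
def cq3EdgeList : List (Vtx3 × Vtx3) :=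
  [ ((false,false,false),(false,false,true)),
    ((false,true,false),(false,true,true)),
    ((true,false,false),(true,false,true)),
    ((true,true,false),(true,true,true)),
    ((false,false,false),(false,true,false)),
    ((false,false,true),(false,true,true)),
    ((true,false,false),(true,true,false)),
    ((true,false,true),(true,true,true)),
    ((false,false,false),(true,false,false)),
    ((false,true,false),(true,true,false)),
    ((false,false,true),(true,true,true)),
    ((false,true,true),(true,false,true)) ]

/-- The 3-dimensional crossed cube `CQ_3`. -/
def CQ3 : SimpleGraph Vtx3 where
  Adj u v := (u, v) ∈ cq3EdgeList ∨ (v, u) ∈ cq3EdgeList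
  symm := ⟨fun _ _ h => Or.symm h⟩
  loopless := ⟨by
    intro x
    revert x
    decide⟩

instance : DecidableRel CQ3.Adj :=
  fun u v => inferInstanceAs (Decidable ((u, v) ∈ cq3EdgeList ∨ (v, u) ∈ cq3EdgeList))

open SimpleGraph Walk

def vA : Fin 3 → Vtx3
  | 0 => (false,false,false)
  | 1 => (false,true,true)
  | 2 => (true,true,false)

def vB : Fin 3 → Vtx3
  | 0 => (false,false,true)
  | 1 => (false,true,false)
  | 2 => (true,false,false)

def myEdge (u v : Vtx3) (h : CQ3.Adj u v := by decide) : CQ3.Walk u v :=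
  Walk.cons h Walk.nil

def myPath2 (u w v : Vtx3) (h1 : CQ3.Adj u w := by decide)
    (h2 : CQ3.Adj w v := by decide) : CQ3.Walk u v :=
  Walk.cons h1 (Walk.cons h2 Walk.nil)

def myP : ∀ i j : Fin 3, CQ3.Walk (vA i) (vB j)
  | 0, 0 => myEdge _ _
  | 0, 1 => myEdge _ _
  | 0, 2 => myEdge _ _
  | 1, 0 => myEdge _ _
  | 1, 1 => myEdge _ _
  | 1, 2 => myPath2 _ (true,false,true) _
  | 2, 0 => myPath2 _ (true,true,true) _
  | 2, 1 => myEdge _ _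
  | 2, 2 => myEdge _ _

/-- `CQ_3` contains a subgraph homeomorphic to `K_{3,3}`: there are six distinct
branch vertices `a 0, a 1, a 2, b 0, b 1, b 2` and nine paths `p i j` joining
`a i` to `b j` whose interiors are pairwise disjoint and avoid all six branch
vertices. -/
theorem cq3_k33_subdivision :
    ∃ (a b : Fin 3 → Vtx3) (p : ∀ i j : Fin 3, CQ3.Walk (a i) (b j)),
      Function.Injective a ∧ Function.Injective b ∧
      (∀ i j, a i ≠ b j) ∧
      (∀ i j, (p i j).IsPath) ∧
      (∀ i j k l, (i, j) ≠ (k, l) → ∀ v : Vtx3,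
        (v ∈ (p i j).support ∧ v ≠ a i ∧ v ≠ b j) →
        ¬(v ∈ (p k l).support ∧ v ≠ a k ∧ v ≠ b l)) ∧
      (∀ i j, ∀ v ∈ (p i j).support, v ≠ a i → v ≠ b j →
        ∀ k, v ≠ a k ∧ v ≠ b k) := by
  refine ⟨vA, vB, myP, by decide, by decide, by decide, ?_, ?_, ?_⟩
  · intro i j
    rw [SimpleGraph.Walk.isPath_def]
    fin_cases i <;> fin_cases j <;> simp only [myP, myEdge, myPath2, vA, vB, Walk.support_cons, Walk.support_nil] <;> decide
  · intro i j k l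
    fin_cases i <;> fin_cases j <;> fin_cases k <;> fin_cases l <;>
      simp only [myP, myEdge, myPath2, vA, vB, Walk.support_cons, Walk.support_nil] <;> decide
  · intro i j
    fin_cases i <;> fin_cases j <;>
      simp only [myP, myEdge, myPath2, vA, vB, Walk.support_cons, Walk.support_nil] <;> decide
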